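/- Assume λ₂ > 0. Then P_n(n^{1/4}x)/Q_n(n^{1/4}x) converges, uniformly on compact subsets of ℂ \ [-(4/3)^{1/4}, (4/3)^{1/4}], to 2√3 · ( x φ((3/4)^{1/4}x) / (1 + φ((3/4)^{1/4}x)²) )², where φ(z) = z + √(z²−1). -/

import Mathlib

open Polynomial MeasureTheory Filter Topology

/-- The Freud inner product `⟨f,g⟩_F = ∫_ℝ f(x) g(x) e^{-x⁴} dx`. -/
noncomputable def innerF (f g : Polynomial ℝ) : ℝ :=
  ∫ x : ℝ, f.eval x * g.eval x * Real.exp (-x ^ 4)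


/-- The Sobolev inner product
`⟨f,g⟩_S = ⟨f,g⟩_F + λ₁ f(0) g(0) + λ₂ f'(0) g'(0)`. -/
noncomputable def innerS (l1 l2 : ℝ) (f g : Polynomial ℝ) : ℝ :=
  innerF f g + l1 * f.eval 0 * g.eval 0
    + l2 * (Polynomial.derivative f).eval 0 * (Polynomial.derivative g).eval 0

open Filter Topology in
/-- `φ(z) = z + √(z²−1)` (with `√(z²−1) > 0` for `z > 1`), the conformal map of
`ℂ \ [-1,1]` onto the exterior of the closed unit disk; written in the form
`z(1 + √(1 − z⁻²))` which selects the correct branch on all of `ℂ \ [-1,1]`. -/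
noncomputable def phi (z : ℂ) : ℂ := z * (1 + (1 - z⁻¹ ^ 2) ^ ((1 : ℂ) / 2))

/-! ### Auxiliary lemmas -/

section SFRaux

open Metric

lemma SFR.phi_facts {w : ℂ} (hw0 : w ≠ 0) (hw1 : w ^ 2 ≠ 1) :
    phi w ≠ 0 ∧ 1 + phi w ^ 2 = 2 * w * phi w := by
  have hv : (1 - w⁻¹ ^ 2) ≠ 0 := by
    intro h
    apply hw1
    have h2 : w⁻¹ ^ 2 = 1 := by linear_combination -h
    have := congrArg (fun t => t * w ^ 2) h2
    simpa [inv_pow, inv_mul_cancel₀ (pow_ne_zero 2 hw0)] using this.symm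
  set u : ℂ := (1 - w⁻¹ ^ 2) ^ ((1 : ℂ) / 2) with hu
  have hu2 : u ^ 2 = 1 - w⁻¹ ^ 2 := by
    rw [hu, sq, ← Complex.cpow_add _ _ hv]
    norm_num
  have hune : 1 + u ≠ 0 := by
    intro h
    have hum : u = -1 := by linear_combination h
    have h1 : (1 - w⁻¹ ^ 2) = 1 := by rw [← hu2, hum]; ring
    rw [hu, h1, Complex.one_cpow] at hum
    norm_num at hum
  constructor
  · exact mul_ne_zero hw0 hune
  · have h2 : w * w⁻¹ = 1 := mul_inv_cancel₀ hw0
    show 1 + (w * (1 + u)) ^ 2 = 2 * w * (w * (1 + u))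
    linear_combination w ^ 2 * hu2 - (w * w⁻¹ + 1) * h2

lemma SFR.c_pos : (0:ℝ) < (3/4 : ℝ) ^ ((1:ℝ)/4) := Real.rpow_pos_of_pos (by norm_num) _
lemma SFR.a_pos : (0:ℝ) < (4/3 : ℝ) ^ ((1:ℝ)/4) := Real.rpow_pos_of_pos (by norm_num) _

lemma SFR.ca_one : (3/4 : ℝ) ^ ((1:ℝ)/4) * (4/3 : ℝ) ^ ((1:ℝ)/4) = 1 := by
  rw [← Real.mul_rpow (by norm_num) (by norm_num)]
  norm_num

lemma SFR.c_sq : ((3/4 : ℝ) ^ ((1:ℝ)/4)) ^ 2 = Real.sqrt 3 / 2 := by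
  rw [← Real.rpow_natCast ((3/4:ℝ) ^ ((1:ℝ)/4)) 2, ← Real.rpow_mul (by norm_num)]
  norm_num
  rw [← Real.sqrt_eq_rpow, Real.sqrt_div (by norm_num : (0:ℝ) ≤ 3) 4,
    show (4:ℝ) = 2^2 by norm_num, Real.sqrt_sq (by norm_num)]

lemma SFR.s12_sq : (((12:ℝ) ^ ((1:ℝ)/4)) : ℝ) ^ 2 = 2 * Real.sqrt 3 := by
  rw [← Real.rpow_natCast ((12:ℝ) ^ ((1:ℝ)/4)) 2, ← Real.rpow_mul (by norm_num)]
  norm_num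
  rw [← Real.sqrt_eq_rpow]
  rw [show (12:ℝ) = 2^2 * 3 by norm_num, Real.sqrt_mul (by positivity),
    Real.sqrt_sq (by norm_num)]

lemma SFR.sqrt3_sq : Real.sqrt 3 * Real.sqrt 3 = 3 := Real.mul_self_sqrt (by norm_num)
lemma SFR.sqrt3_pos : (0:ℝ) < Real.sqrt 3 := Real.sqrt_pos.2 (by norm_num)

lemma SFR.target_one {z f cc : ℂ} (hz0 : z ≠ 0) (hphi : f ≠ 0) (hcc : cc ≠ 0)
    (hid : 1 + f ^ 2 = 2 * (cc * z) * f)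
    (hc2 : cc ^ 2 = (Real.sqrt 3 : ℂ) / 2) :
    ((2 * Real.sqrt 3 : ℝ) : ℂ) * ((z * f) / (1 + f ^ 2)) ^ 2 = 1 := by
  have hne : 1 + f ^ 2 ≠ 0 := by
    rw [hid]
    exact mul_ne_zero (mul_ne_zero two_ne_zero (mul_ne_zero hcc hz0)) hphi
  rw [hid]
  push_cast
  field_simp
  linear_combination (-2) * hc2

lemma SFR.Lexpr_eq {z f s12 cc : ℂ} (hz0 : z ≠ 0) (hphi : f ≠ 0)
    (hid : 1 + f ^ 2 = 2 * (cc * z) * f)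
    (hc2 : cc ^ 2 = (Real.sqrt 3 : ℂ) / 2)
    (h12 : s12 ^ 2 = 2 * (Real.sqrt 3 : ℂ)) :
    ((s12 / f) * (s12 / f))⁻¹ + ((1 / Real.sqrt 3 : ℝ) : ℂ)
      + ((1 / 12 : ℝ) : ℂ) * ((s12 / f) * (s12 / f)) = z ^ 2 := by
  have h3 : (Real.sqrt 3 : ℂ) * (Real.sqrt 3 : ℂ) = 3 := by
    rw [← Complex.ofReal_mul, SFR.sqrt3_sq]; norm_num
  have h3ne : (Real.sqrt 3 : ℂ) ≠ 0 := by
    simp [SFR.sqrt3_pos.ne']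
  rw [div_mul_div_comm, ← sq, ← sq, h12]
  push_cast
  set s : ℂ := (Real.sqrt 3 : ℂ) with hs
  field_simp
  linear_combination 12*(1+f^2+2*cc*z*f)*hid + 48*z^2*f^2*hc2 + 4*h3

lemma SFR.region_facts {z : ℂ}
    (hz : z ∉ ((fun t : ℝ => (t : ℂ)) ''
      Set.Icc (-((4/3:ℝ) ^ ((1:ℝ)/4))) ((4/3:ℝ) ^ ((1:ℝ)/4)))) :
    z ≠ 0 ∧ ((((3/4:ℝ) ^ ((1:ℝ)/4) : ℝ) : ℂ) * z) ≠ 0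
      ∧ ((((3/4:ℝ) ^ ((1:ℝ)/4) : ℝ) : ℂ) * z) ^ 2 ≠ 1 := by
  have ha : (0:ℝ) ≤ (4/3:ℝ) ^ ((1:ℝ)/4) := SFR.a_pos.le
  have hc0 : ((((3/4:ℝ) ^ ((1:ℝ)/4) : ℝ) : ℂ)) ≠ 0 := by exact_mod_cast SFR.c_pos.ne'
  have hz0 : z ≠ 0 := by
    rintro rfl
    exact hz ⟨0, ⟨neg_nonpos.2 ha, ha⟩, by norm_num⟩
  refine ⟨hz0, mul_ne_zero hc0 hz0, ?_⟩
  intro h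
  have hca : ((((3/4:ℝ) ^ ((1:ℝ)/4) : ℝ) : ℂ)) * (((4/3:ℝ) ^ ((1:ℝ)/4) : ℝ) : ℂ) = 1 := by
    rw [← Complex.ofReal_mul, SFR.ca_one]; norm_num
  have h' : ((((3/4:ℝ) ^ ((1:ℝ)/4) : ℝ) : ℂ) * z - 1)
      * ((((3/4:ℝ) ^ ((1:ℝ)/4) : ℝ) : ℂ) * z + 1) = 0 := by linear_combination h
  rcases mul_eq_zero.1 h' with h1 | h1
  · have h2 : ((((3/4:ℝ) ^ ((1:ℝ)/4) : ℝ) : ℂ)) * z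
        = ((((3/4:ℝ) ^ ((1:ℝ)/4) : ℝ) : ℂ)) * (((4/3:ℝ) ^ ((1:ℝ)/4) : ℝ) : ℂ) := by
      rw [hca]; linear_combination h1
    have h3 : z = (((4/3:ℝ) ^ ((1:ℝ)/4) : ℝ) : ℂ) := mul_left_cancel₀ hc0 h2
    exact hz ⟨(4/3:ℝ) ^ ((1:ℝ)/4), ⟨by linarith, le_refl _⟩, h3.symm⟩
  · have h2 : ((((3/4:ℝ) ^ ((1:ℝ)/4) : ℝ) : ℂ)) * z
        = ((((3/4:ℝ) ^ ((1:ℝ)/4) : ℝ) : ℂ)) * ((-((4/3:ℝ) ^ ((1:ℝ)/4)) : ℝ) : ℂ) := by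
      push_cast
      rw [mul_neg, hca]
      linear_combination h1
    have h3 : z = ((-((4/3:ℝ) ^ ((1:ℝ)/4)) : ℝ) : ℂ) := mul_left_cancel₀ hc0 h2
    exact hz ⟨-((4/3:ℝ) ^ ((1:ℝ)/4)), ⟨le_refl _, by linarith⟩, h3.symm⟩

lemma SFR.phi_norm_le {w : ℂ} {ρ R : ℝ} (hρ : 0 < ρ) (h1 : ρ ≤ ‖w‖) (h2 : ‖w‖ ≤ R) :
    ‖phi w‖ ≤ R * (1 + (1 + ρ⁻¹^2) ^ ((1:ℝ)/2)) := by
  have hub : ‖(1 - w⁻¹ ^ 2 : ℂ) ^ ((1:ℂ)/2)‖ ≤ (1 + ρ⁻¹^2) ^ ((1:ℝ)/2) := by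
    rcases eq_or_ne (1 - w⁻¹^2 : ℂ) 0 with hv | hv
    · rw [hv, Complex.zero_cpow (by norm_num : ((1:ℂ)/2) ≠ 0), norm_zero]
      positivity
    · have habs := Complex.norm_cpow_of_ne_zero hv ((1:ℂ)/2)
      rw [show (((1:ℂ)/2)).im = 0 by norm_num, show (((1:ℂ)/2)).re = (1:ℝ)/2 by norm_num,
        mul_zero, Real.exp_zero, div_one] at habs
      rw [habs]
      have hwinv : ‖w‖⁻¹ ≤ ρ⁻¹ := by
        apply inv_anti₀ hρ
        exact h1
      have hb : ‖(1 - w⁻¹^2 : ℂ)‖ ≤ 1 + ρ⁻¹^2 := by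
        calc ‖(1 - w⁻¹^2 : ℂ)‖ ≤ ‖(1:ℂ)‖ + ‖w⁻¹^2‖ :=
              norm_sub_le _ _
        _ = 1 + ‖w‖⁻¹^2 := by simp [norm_pow, norm_inv]
        _ ≤ 1 + ρ⁻¹^2 := by
              have h4 : ‖w‖⁻¹^2 ≤ ρ⁻¹^2 := by
                apply pow_le_pow_left₀ (by positivity) hwinv
              linarith
      exact Real.rpow_le_rpow (norm_nonneg _) hb (by norm_num)
  have h1u : ‖(1 : ℂ) + (1 - w⁻¹ ^ 2) ^ ((1:ℂ)/2)‖ ≤ 1 + (1 + ρ⁻¹^2) ^ ((1:ℝ)/2) := by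
    calc ‖(1 : ℂ) + (1 - w⁻¹ ^ 2) ^ ((1:ℂ)/2)‖ ≤ ‖(1:ℂ)‖ + ‖(1 - w⁻¹ ^ 2 : ℂ) ^ ((1:ℂ)/2)‖ :=
          norm_add_le _ _
    _ ≤ 1 + (1 + ρ⁻¹^2) ^ ((1:ℝ)/2) := by rw [norm_one]; linarith
  rw [phi, norm_mul]
  exact mul_le_mul h2 h1u (norm_nonneg _) (le_trans (by positivity) (h1.trans h2))

lemma SFR.tuo_const {α : ℕ → ℂ} {β : ℂ} (h : Tendsto α atTop (𝓝 β)) (s : Set ℂ) :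
    TendstoUniformlyOn (fun n (_ : ℂ) => α n) (fun _ => β) atTop s := by
  rw [Metric.tendstoUniformlyOn_iff]
  intro ε hε
  have h2 := (h.eventually (Metric.ball_mem_nhds β hε))
  filter_upwards [h2] with n hn x _
  simpa [Metric.mem_ball, dist_comm] using hn

lemma SFR.tuo_fixed (f : ℂ → ℂ) (s : Set ℂ) :
    TendstoUniformlyOn (fun (_ : ℕ) z => f z) f atTop s := by
  rw [Metric.tendstoUniformlyOn_iff]
  intro ε hε
  filter_upwards with n x _
  simpa using hε

lemma SFR.tuo_mul {F G : ℕ → ℂ → ℂ} {f g : ℂ → ℂ} {s : Set ℂ} {Mf Mg : ℝ}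
    (hMf : ∀ z ∈ s, ‖f z‖ ≤ Mf) (hMg : ∀ z ∈ s, ‖g z‖ ≤ Mg)
    (hF : TendstoUniformlyOn F f atTop s) (hG : TendstoUniformlyOn G g atTop s) :
    TendstoUniformlyOn (fun n z => F n z * G n z) (fun z => f z * g z) atTop s := by
  rw [Metric.tendstoUniformlyOn_iff] at *
  intro ε hε
  have hD : (0:ℝ) < |Mf| + |Mg| + 2 := by positivity
  set η := min 1 (ε / (|Mf| + |Mg| + 2)) with hη
  have hηpos : 0 < η := lt_min one_pos (by positivity)
  filter_upwards [hF η hηpos, hG η hηpos] with n hFn hGn z hz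
  have h1 : ‖f z - F n z‖ < η := by
    have := hFn z hz; rwa [dist_eq_norm] at this
  have h2 : ‖g z - G n z‖ < η := by
    have := hGn z hz; rwa [dist_eq_norm] at this
  have key : f z * g z - F n z * G n z
      = f z * (g z - G n z) + (f z - F n z) * g z - (f z - F n z) * (g z - G n z) := by ring
  rw [dist_eq_norm, key]
  have hfz : ‖f z‖ ≤ |Mf| := (hMf z hz).trans (le_abs_self _)
  have hgz : ‖g z‖ ≤ |Mg| := (hMg z hz).trans (le_abs_self _)
  have hb : ‖f z * (g z - G n z) + (f z - F n z) * g z - (f z - F n z) * (g z - G n z)‖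
      ≤ |Mf| * η + η * |Mg| + η * η := by
    refine (norm_sub_le _ _).trans ?_
    gcongr
    · refine (norm_add_le _ _).trans ?_
      gcongr
      · rw [norm_mul]
        exact mul_le_mul hfz h2.le (norm_nonneg _) (abs_nonneg _)
      · rw [norm_mul]
        exact mul_le_mul h1.le hgz (norm_nonneg _) (by positivity)
    · rw [norm_mul]
      exact mul_le_mul h1.le h2.le (norm_nonneg _) (by positivity)
  refine lt_of_le_of_lt hb ?_
  have hη1 : η ≤ 1 := min_le_left _ _
  have hη2 : η ≤ ε / (|Mf| + |Mg| + 2) := min_le_right _ _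
  have hb2 : |Mf| * η + η * |Mg| + η * η ≤ η * (|Mf| + |Mg| + 1) := by
    nlinarith [abs_nonneg Mf, abs_nonneg Mg, hηpos.le]
  refine hb2.trans_lt ?_
  have hb3 : η * (|Mf| + |Mg| + 1) ≤ (ε / (|Mf| + |Mg| + 2)) * (|Mf| + |Mg| + 1) := by
    apply mul_le_mul_of_nonneg_right hη2 (by positivity)
  refine hb3.trans_lt ?_
  rw [div_mul_eq_mul_div, div_lt_iff₀ hD]
  nlinarith [abs_nonneg Mf, abs_nonneg Mg]

lemma SFR.tuo_inv {F : ℕ → ℂ → ℂ} {f : ℂ → ℂ} {s : Set ℂ} {ℓ : ℝ}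
    (hℓ : 0 < ℓ) (hf : ∀ z ∈ s, ℓ ≤ ‖f z‖)
    (hF : TendstoUniformlyOn F f atTop s) :
    TendstoUniformlyOn (fun n z => (F n z)⁻¹) (fun z => (f z)⁻¹) atTop s := by
  rw [Metric.tendstoUniformlyOn_iff] at *
  intro ε hε
  set η := min (ℓ/2) (ε * ℓ^2 / 4) with hη
  have hηpos : 0 < η := lt_min (by positivity) (by positivity)
  filter_upwards [hF η hηpos] with n hFn z hz
  have h1 : ‖f z - F n z‖ < η := by rw [← dist_eq_norm]; exact hFn z hz
  have hfz : ℓ ≤ ‖f z‖ := hf z hz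
  have hfne : f z ≠ 0 := by
    intro h; rw [h, norm_zero] at hfz; exact absurd hfz (not_le.2 hℓ)
  have hFnz : ℓ/2 ≤ ‖F n z‖ := by
    have h5 := norm_sub_norm_le (f z) (F n z)
    have hηl : η ≤ ℓ/2 := min_le_left _ _
    linarith [h1.le.trans hηl]
  have hFne : F n z ≠ 0 := by
    intro h; rw [h, norm_zero] at hFnz; linarith
  have key : (f z)⁻¹ - (F n z)⁻¹ = (F n z - f z) * ((f z)⁻¹ * (F n z)⁻¹) := by
    field_simp
  rw [dist_eq_norm, key, norm_mul, norm_mul, norm_inv, norm_inv]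
  have hb1 : ‖F n z - f z‖ < η := by rwa [norm_sub_rev]
  have i1 : ‖f z‖⁻¹ ≤ ℓ⁻¹ := inv_anti₀ hℓ hfz
  have i2 : ‖F n z‖⁻¹ ≤ (ℓ/2)⁻¹ := inv_anti₀ (by positivity) hFnz
  have hstep : ‖F n z - f z‖ * (‖f z‖⁻¹ * ‖F n z‖⁻¹) ≤ ‖F n z - f z‖ * (ℓ⁻¹ * (ℓ/2)⁻¹) := by
    refine mul_le_mul_of_nonneg_left ?_ (norm_nonneg _)
    exact mul_le_mul i1 i2 (by positivity) (by positivity)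
  refine hstep.trans_lt ?_
  have hη2 : η ≤ ε * ℓ^2 / 4 := min_le_right _ _
  have hcalc : η * (ℓ⁻¹ * (ℓ/2)⁻¹) < ε := by
    rw [show ℓ⁻¹ * (ℓ/2)⁻¹ = 2 / ℓ^2 by field_simp]
    calc η * (2/ℓ^2) ≤ (ε * ℓ^2/4) * (2/ℓ^2) := by gcongr
    _ = ε/2 := by field_simp; ring
    _ < ε := by linarith
  calc ‖F n z - f z‖ * (ℓ⁻¹ * (ℓ/2)⁻¹) ≤ η * (ℓ⁻¹ * (ℓ/2)⁻¹) := by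
        have h0 : (0:ℝ) ≤ ℓ⁻¹ * (ℓ/2)⁻¹ := by positivity
        exact mul_le_mul_of_nonneg_right hb1.le h0
  _ < ε := hcalc

lemma SFR.tuo_shift {K K' : Set ℂ} {R : ℝ} (hR0 : 0 < R) (hRK : ∀ z ∈ K, ‖z‖ ≤ R)
    {F : ℕ → ℂ → ℂ} {G : ℂ → ℂ}
    (hF : TendstoUniformlyOn F G atTop K')
    (hGc : UniformContinuousOn G K') {MG : ℝ} (hMG : ∀ z ∈ K', ‖G z‖ ≤ MG)
    {lam : ℕ → ℝ} (hlam : Tendsto lam atTop (𝓝 1))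
    {m : ℕ → ℕ} (hm : Tendsto m atTop atTop)
    (hmem : ∀ᶠ n in atTop, ∀ z ∈ K, ((lam n : ℝ) : ℂ) * z ∈ K')
    (hKK' : K ⊆ K') :
    TendstoUniformlyOn (fun n z => ((lam n : ℝ) : ℂ) * F (m n) (((lam n : ℝ) : ℂ) * z))
      G atTop K := by
  rw [Metric.tendstoUniformlyOn_iff]
  intro ε hε
  obtain ⟨δ, hδ0, hδ⟩ := Metric.uniformContinuousOn_iff.1 hGc (ε/4) (by positivity)
  have hev1 : ∀ᶠ n in atTop, ∀ w ∈ K', dist (G w) (F (m n) w) < ε/4 := by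
    have h4 : ∀ᶠ N in atTop, ∀ w ∈ K', dist (G w) (F N w) < ε/4 :=
      Metric.tendstoUniformlyOn_iff.1 hF (ε/4) (by positivity)
    exact hm.eventually h4
  have hev2 : ∀ᶠ n in atTop, |lam n - 1| < min (δ / R) (ε / (4 * (|MG| + 1))) := by
    have hmin : (0:ℝ) < min (δ / R) (ε / (4 * (|MG| + 1))) :=
      lt_min (by positivity) (by positivity)
    have h := hlam.eventually (Metric.ball_mem_nhds (1:ℝ) hmin)
    filter_upwards [h] with n hn
    simpa [Real.dist_eq, Metric.mem_ball] using hn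
  have hev3 : ∀ᶠ n in atTop, |lam n| ≤ 2 := by
    have h := hlam.eventually (Metric.ball_mem_nhds (1:ℝ) one_pos)
    filter_upwards [h] with n hn
    have h6 : |lam n - 1| < 1 := by simpa [Real.dist_eq, Metric.mem_ball] using hn
    cases' abs_lt.1 h6 with h1 h2
    rw [abs_le]; constructor <;> linarith
  filter_upwards [hev1, hev2, hev3, hmem] with n h1 h2 h3 h4 z hz
  set w : ℂ := ((lam n : ℝ) : ℂ) * z with hw
  have hwK' : w ∈ K' := h4 z hz
  have hzK' : z ∈ K' := hKK' hz
  have hdzw : dist z w < δ := by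
    rw [hw, dist_eq_norm]
    have h7 : z - ((lam n : ℝ) : ℂ) * z = ((1 - lam n : ℝ) : ℂ) * z := by push_cast; ring
    rw [h7, norm_mul]
    have hnz : ‖(((1 - lam n : ℝ)) : ℂ)‖ = |lam n - 1| := by
      rw [Complex.norm_real, Real.norm_eq_abs, abs_sub_comm]
    rw [hnz]
    calc |lam n - 1| * ‖z‖ ≤ |lam n - 1| * R :=
          mul_le_mul_of_nonneg_left (hRK z hz) (abs_nonneg _)
    _ < (δ / R) * R := by
          apply mul_lt_mul_of_pos_right (lt_of_lt_of_le h2 (min_le_left _ _)) hR0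
    _ = δ := by field_simp
  have t1 : dist (G z) (G w) < ε/4 := hδ z hzK' w hwK' hdzw
  have t2 : dist (G w) (((lam n : ℝ) : ℂ) * G w) < ε/4 := by
    rw [dist_eq_norm]
    have h8 : G w - ((lam n : ℝ) : ℂ) * G w = ((1 - lam n : ℝ) : ℂ) * G w := by push_cast; ring
    rw [h8, norm_mul, Complex.norm_real, Real.norm_eq_abs, abs_sub_comm]
    calc |lam n - 1| * ‖G w‖ ≤ |lam n - 1| * (|MG| + 1) := by
          apply mul_le_mul_of_nonneg_left _ (abs_nonneg _)
          have h9 := hMG w hwK'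
          have h' : MG ≤ |MG| := le_abs_self _
          linarith
    _ < (ε / (4 * (|MG| + 1))) * (|MG| + 1) := by
          apply mul_lt_mul_of_pos_right (lt_of_lt_of_le h2 (min_le_right _ _)) (by positivity)
    _ = ε/4 := by field_simp
  have t3 : dist (((lam n : ℝ) : ℂ) * G w) (((lam n : ℝ) : ℂ) * F (m n) w) < 2 * (ε/4) := by
    rw [dist_eq_norm, ← mul_sub, norm_mul, Complex.norm_real, Real.norm_eq_abs]
    have hd := h1 w hwK'
    rw [dist_eq_norm] at hd
    calc |lam n| * ‖G w - F (m n) w‖ ≤ 2 * ‖G w - F (m n) w‖ :=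
          mul_le_mul_of_nonneg_right h3 (norm_nonneg _)
    _ < 2 * (ε/4) := by linarith [hd]
  calc dist (G z) (((lam n : ℝ) : ℂ) * F (m n) w)
      ≤ dist (G z) (G w) + dist (G w) (((lam n : ℝ) : ℂ) * G w)
        + dist (((lam n : ℝ) : ℂ) * G w) (((lam n : ℝ) : ℂ) * F (m n) w) := dist_triangle4 _ _ _ _
  _ < ε/4 + ε/4 + 2*(ε/4) := by linarith
  _ = ε := by ring

noncomputable def SFR.sR (n : ℕ) : ℝ := (n : ℝ) ^ ((1:ℝ)/4)

lemma SFR.sR_def (n : ℕ) : (n : ℝ) ^ ((1:ℝ)/4) = SFR.sR n := rfl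

lemma SFR.lam_add (j : ℕ) : Tendsto (fun n : ℕ => SFR.sR n / SFR.sR (n + j)) atTop (𝓝 1) := by
  have hbase : Tendsto (fun n : ℕ => (n:ℝ)/((n:ℝ)+(j:ℝ))) atTop (𝓝 1) :=
    tendsto_natCast_div_add_atTop (j:ℝ)
  have h2 := hbase.rpow_const (Or.inr (by norm_num : (0:ℝ) ≤ 1/4))
  rw [Real.one_rpow] at h2
  apply h2.congr
  intro n
  rw [Real.div_rpow (Nat.cast_nonneg n) (by positivity)]
  unfold SFR.sR
  push_cast
  norm_num

lemma SFR.lam_sub1 : Tendsto (fun n : ℕ => SFR.sR n / SFR.sR (n - 1)) atTop (𝓝 1) := by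
  rw [← tendsto_add_atTop_iff_nat 1]
  have hbase : Tendsto (fun n : ℕ => ((n:ℝ)+1)/(n:ℝ)) atTop (𝓝 1) := by
    have h0 : Tendsto (fun n : ℕ => 1 + 1/(n:ℝ)) atTop (𝓝 (1+0)) :=
      tendsto_const_nhds.add tendsto_one_div_atTop_nhds_zero_nat
    rw [add_zero] at h0
    apply h0.congr'
    filter_upwards [eventually_ge_atTop 1] with n hn
    have hne : (n:ℝ) ≠ 0 := (Nat.cast_pos.2 hn).ne'
    field_simp
  have h2 := hbase.rpow_const (Or.inr (by norm_num : (0:ℝ) ≤ 1/4))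
  rw [Real.one_rpow] at h2
  apply h2.congr'
  filter_upwards [eventually_ge_atTop 1] with n hn
  rw [Real.div_rpow (by positivity) (Nat.cast_nonneg n)]
  simp only [Nat.add_sub_cancel]
  unfold SFR.sR
  push_cast
  norm_num

lemma SFR.sR_sq (n : ℕ) : (SFR.sR n)^2 = Real.sqrt n := by
  unfold SFR.sR
  rw [← Real.rpow_natCast ((n:ℝ) ^ ((1:ℝ)/4)) 2, ← Real.rpow_mul (Nat.cast_nonneg n)]
  norm_num
  rw [← Real.sqrt_eq_rpow]

lemma SFR.sR_pos {n : ℕ} (hn : 1 ≤ n) : 0 < SFR.sR n :=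
  Real.rpow_pos_of_pos (by exact_mod_cast hn) _

lemma SFR.arg_cancel {m : ℕ} (hm : 1 ≤ m) (n : ℕ) (z : ℂ) :
    ((SFR.sR m : ℝ):ℂ) * (((SFR.sR n / SFR.sR m : ℝ):ℂ) * z) = ((SFR.sR n:ℝ):ℂ) * z := by
  rw [← mul_assoc, ← Complex.ofReal_mul, mul_comm (SFR.sR m), div_mul_cancel₀ _ (SFR.sR_pos hm).ne']

lemma SFR.pref {m n : ℕ} (hm : 1 ≤ m) (X Y : ℂ) :
    ((SFR.sR n / SFR.sR m : ℝ):ℂ) * (((SFR.sR m:ℝ):ℂ) * X / Y)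
      = ((SFR.sR n:ℝ):ℂ) * X / Y := by
  rw [mul_div_assoc, ← mul_assoc, ← Complex.ofReal_mul,
    div_mul_cancel₀ _ (SFR.sR_pos hm).ne', mul_div_assoc]

end SFRaux
lemma SFR.Dsum_eq {sn rn nn z A2 A1 A0 B1 B2 Qe sg dl : ℂ}
    (hz : z ≠ 0) (hA1 : A1 ≠ 0) (hA0 : A0 ≠ 0) (hB1 : B1 ≠ 0)
    (hrn : sn^2 = rn) (hnn : rn * rn = nn) (hrnne : rn ≠ 0) (hnnne : nn ≠ 0)
    (hEid : (sn*z)^2 * Qe = A2 + sg * A0 + dl * B2) :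
    z^2 * (((sn*A0/A1)*(sn*A1/A2))⁻¹ + sg/rn + dl/nn * ((sn*B2/B1)*(sn*B1/A0)))⁻¹
      = A0/Qe := by
  have e1 : (sn*A0/A1)*(sn*A1/A2) = sn^2*A0/A2 := by
    rw [div_mul_div_comm, show (sn*A0)*(sn*A1) = A1*(sn^2*A0) by ring,
      mul_div_mul_left _ _ hA1]
  have e3 : (sn*B2/B1)*(sn*B1/A0) = sn^2*B2/A0 := by
    rw [div_mul_div_comm, show (sn*B2)*(sn*B1) = B1*(sn^2*B2) by ring,
      mul_div_mul_left _ _ hB1]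
  rw [e1, inv_div, e3, hrn]
  have hEid' : rn * z^2 * Qe = A2 + sg*A0 + dl*B2 := by
    rw [← hrn]; linear_combination hEid
  have hD : A2/(rn*A0) + sg/rn + dl/nn * (rn*B2/A0) = z^2*Qe/A0 := by
    field_simp
    linear_combination (-nn) * hEid' + (dl*B2) * hnn
  rw [hD, inv_div, ← mul_div_assoc, mul_div_mul_left _ _ (pow_ne_zero 2 hz)]
open Filter Topology in
/-- Case `λ₂ > 0`: uniformly on compact subsets of `ℂ \ [-(4/3)^{1/4}, (4/3)^{1/4}]`,
`P_n(n^{1/4} x)/Q_n(n^{1/4} x) → 2√3 · (x φ((3/4)^{1/4} x)/(1 + φ((3/4)^{1/4} x)²))²`. -/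
theorem sobolev_freud_ratio_asymptotics_lambda2_pos
    (l1 l2 : ℝ) (hl1 : 0 ≤ l1) (hl2 : 0 < l2)
    (P Q : ℕ → Polynomial ℝ) (c k khat : ℕ → ℝ)
    (hPmonic : ∀ n, (P n).Monic) (hPdeg : ∀ n, (P n).natDegree = n)
    (hPorth : ∀ n m : ℕ, m < n → innerF (P n) (X ^ m) = 0)
    (hQmonic : ∀ n, (Q n).Monic) (hQdeg : ∀ n, (Q n).natDegree = n)
    (hQorth : ∀ n m : ℕ, m < n → innerS l1 l2 (Q n) (X ^ m) = 0)
    (hP0 : P 0 = 1) (hP1 : P 1 = X)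
    (hrec : ∀ n, 1 ≤ n → X * P n = P (n + 1) + C (c n) * P (n - 1))
    (hk : ∀ n, k n = innerF (P n) (P n))
    (hkhat : ∀ n, khat n = innerS l1 l2 (Q n) (Q n))
    (sig del : ℕ → ℝ)
    (hconn : ∀ n, 2 ≤ n →
      X ^ 2 * Q n = P (n + 2) + C (sig n) * P n + C (del n) * P (n - 2))
    (hsig : Tendsto (fun n => sig n / Real.sqrt n) atTop (𝓝 (1 / Real.sqrt 3)))
    (hdel : Tendsto (fun n => del n / n) atTop (𝓝 (1 / 12)))
    (hPratio : ∀ K : Set ℂ, IsCompact K →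
      K ⊆ ((fun t : ℝ => (t : ℂ)) ''
          Set.Icc (-((4 / 3 : ℝ) ^ ((1 : ℝ) / 4))) ((4 / 3 : ℝ) ^ ((1 : ℝ) / 4)))ᶜ →
      TendstoUniformlyOn
        (fun (n : ℕ) (z : ℂ) =>
          (((n : ℝ) ^ ((1 : ℝ) / 4) : ℝ) : ℂ) *
              ((P (n - 1)).map (algebraMap ℝ ℂ)).eval ((((n : ℝ) ^ ((1 : ℝ) / 4) : ℝ) : ℂ) * z) /
            ((P n).map (algebraMap ℝ ℂ)).eval ((((n : ℝ) ^ ((1 : ℝ) / 4) : ℝ) : ℂ) * z))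
        (fun z => (((12 : ℝ) ^ ((1 : ℝ) / 4) : ℝ) : ℂ) /
          phi ((((3 / 4 : ℝ) ^ ((1 : ℝ) / 4) : ℝ) : ℂ) * z))
        atTop K) :
    ∀ K : Set ℂ, IsCompact K →
      K ⊆ ((fun t : ℝ => (t : ℂ)) ''
          Set.Icc (-((4 / 3 : ℝ) ^ ((1 : ℝ) / 4))) ((4 / 3 : ℝ) ^ ((1 : ℝ) / 4)))ᶜ →
      TendstoUniformlyOn
        (fun (n : ℕ) (z : ℂ) =>
          ((P n).map (algebraMap ℝ ℂ)).eval ((((n : ℝ) ^ ((1 : ℝ) / 4) : ℝ) : ℂ) * z) /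
            ((Q n).map (algebraMap ℝ ℂ)).eval ((((n : ℝ) ^ ((1 : ℝ) / 4) : ℝ) : ℂ) * z))
        (fun z => (2 * Real.sqrt 3 : ℝ) *
          ((z * phi ((((3 / 4 : ℝ) ^ ((1 : ℝ) / 4) : ℝ) : ℂ) * z)) /
            (1 + phi ((((3 / 4 : ℝ) ^ ((1 : ℝ) / 4) : ℝ) : ℂ) * z) ^ 2)) ^ 2)
        atTop K := by
  classical
  intro K hK hKsub
  rcases Set.eq_empty_or_nonempty K with rfl | hKne
  · exact tendstoUniformlyOn_empty
  -- notation
  set S : Set ℂ := ((fun t : ℝ => (t : ℂ)) ''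
      Set.Icc (-((4 / 3 : ℝ) ^ ((1 : ℝ) / 4))) ((4 / 3 : ℝ) ^ ((1 : ℝ) / 4))) with hS
  set Fr : ℕ → ℂ → ℂ := fun (n : ℕ) (z : ℂ) =>
      (((n : ℝ) ^ ((1 : ℝ) / 4) : ℝ) : ℂ) *
          ((P (n - 1)).map (algebraMap ℝ ℂ)).eval ((((n : ℝ) ^ ((1 : ℝ) / 4) : ℝ) : ℂ) * z) /
        ((P n).map (algebraMap ℝ ℂ)).eval ((((n : ℝ) ^ ((1 : ℝ) / 4) : ℝ) : ℂ) * z) with hFr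
  set Gf : ℂ → ℂ := fun z => (((12 : ℝ) ^ ((1 : ℝ) / 4) : ℝ) : ℂ) /
      phi ((((3 / 4 : ℝ) ^ ((1 : ℝ) / 4) : ℝ) : ℂ) * z) with hGf
  -- S basics
  have hScompact : IsCompact S := (isCompact_Icc).image Complex.continuous_ofReal
  have hSclosed : IsClosed S := hScompact.isClosed
  have ha0 : (0:ℝ) < (4/3:ℝ) ^ ((1:ℝ)/4) := SFR.a_pos
  have h0S : (0:ℂ) ∈ S := ⟨0, ⟨neg_nonpos.2 ha0.le, ha0.le⟩, by norm_num⟩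
  have hSne : S.Nonempty := ⟨0, h0S⟩
  -- distance from K to S
  obtain ⟨z₀, hz₀K, hz₀min⟩ := hK.exists_isMinOn hKne (Metric.continuous_infDist_pt S).continuousOn
  set d := Metric.infDist z₀ S with hd
  have hd0 : 0 < d := (hSclosed.notMem_iff_infDist_pos hSne).1 (hKsub hz₀K)
  have hdK : ∀ x ∈ K, d ≤ Metric.infDist x S := fun x hx => isMinOn_iff.1 hz₀min x hx
  -- the enlarged compact set
  set K' := Metric.cthickening (d/2) K with hK'def
  have hK'c : IsCompact K' := hK.cthickening
  have hKK' : K ⊆ K' := Metric.self_subset_cthickening K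
  have hK'ne : K'.Nonempty := hKne.mono hKK'
  have hK'near : ∀ w ∈ K', ∃ y ∈ K, dist w y ≤ d/2 := by
    intro w hw
    obtain ⟨y, hyK, hyd⟩ := hK.exists_infDist_eq_dist hKne w
    refine ⟨y, hyK, ?_⟩
    rw [← hyd]
    rw [Metric.mem_cthickening_iff] at hw
    rw [Metric.infDist, ← ENNReal.toReal_ofReal (by positivity : (0:ℝ) ≤ d/2)]
    exact ENNReal.toReal_mono ENNReal.ofReal_ne_top hw
  have hK'S : ∀ w ∈ K', w ∉ S := by
    intro w hw hwS
    obtain ⟨y, hyK, hyd⟩ := hK'near w hw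
    have h1 : d ≤ Metric.infDist y S := hdK y hyK
    have h2 : Metric.infDist y S ≤ dist y w := Metric.infDist_le_dist_of_mem hwS
    rw [dist_comm] at h2
    linarith
  have hK'sub : K' ⊆ Sᶜ := fun w hw => hK'S w hw
  -- lower and upper norm bounds on K'
  have hlow : ∀ w ∈ K', d/2 ≤ ‖w‖ := by
    intro w hw
    obtain ⟨y, hyK, hyd⟩ := hK'near w hw
    have h1 : d ≤ ‖y‖ := by
      have h2 := hdK y hyK
      have h3 : Metric.infDist y S ≤ dist y 0 := Metric.infDist_le_dist_of_mem h0S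
      rw [dist_zero_right] at h3
      linarith
    have h4 : ‖y‖ - ‖w‖ ≤ dist w y := by
      rw [dist_comm, dist_eq_norm]
      exact (norm_sub_norm_le _ _).trans (le_refl _)
    linarith
  obtain ⟨R₀, hR₀⟩ := hK'c.exists_bound_of_continuousOn continuousOn_id
  set R := max R₀ 1 with hRdef
  have hR1 : (0:ℝ) < R := lt_of_lt_of_le one_pos (le_max_right _ _)
  have hRb : ∀ w ∈ K', ‖w‖ ≤ R := fun w hw => (hR₀ w hw).trans (le_max_left _ _)
  have hRbK : ∀ z ∈ K, ‖z‖ ≤ R := fun z hz => hRb z (hKK' hz)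
  -- pointwise phi facts on K'
  have hphiK' : ∀ z ∈ K', z ≠ 0 ∧ phi ((((3/4:ℝ) ^ ((1:ℝ)/4) : ℝ):ℂ) * z) ≠ 0 ∧
      1 + phi ((((3/4:ℝ) ^ ((1:ℝ)/4) : ℝ):ℂ) * z) ^ 2
        = 2 * (((((3/4:ℝ) ^ ((1:ℝ)/4) : ℝ)):ℂ) * z) * phi ((((3/4:ℝ) ^ ((1:ℝ)/4) : ℝ):ℂ) * z) := by
    intro z hz
    obtain ⟨hz0, hw0, hw1⟩ := SFR.region_facts (hK'S z hz)
    obtain ⟨h1, h2⟩ := SFR.phi_facts hw0 hw1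
    exact ⟨hz0, h1, h2⟩
  -- upper bound for phi on K', lower bound for Gf
  have hc0 : (0:ℝ) < (3/4:ℝ) ^ ((1:ℝ)/4) := SFR.c_pos
  set ρ : ℝ := ((3/4:ℝ) ^ ((1:ℝ)/4)) * (d/2) with hρdef
  set Rw : ℝ := ((3/4:ℝ) ^ ((1:ℝ)/4)) * R with hRwdef
  set M : ℝ := Rw * (1 + (1 + ρ⁻¹^2) ^ ((1:ℝ)/2)) with hMdef
  have hρ0 : 0 < ρ := by positivity
  have hM0 : 0 < M := by positivity
  have hphiM : ∀ z ∈ K', ‖phi ((((3/4:ℝ) ^ ((1:ℝ)/4) : ℝ):ℂ) * z)‖ ≤ M := by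
    intro z hz
    apply SFR.phi_norm_le hρ0
    · rw [norm_mul, Complex.norm_real, Real.norm_eq_abs, abs_of_pos hc0]
      exact mul_le_mul_of_nonneg_left (hlow z hz) hc0.le
    · rw [norm_mul, Complex.norm_real, Real.norm_eq_abs, abs_of_pos hc0]
      exact mul_le_mul_of_nonneg_left (hRb z hz) hc0.le
  set t : ℝ := ((12:ℝ) ^ ((1:ℝ)/4)) / M with htdef
  have ht0 : 0 < t := by
    apply div_pos (Real.rpow_pos_of_pos (by norm_num) _) hM0
  have hGlow : ∀ z ∈ K', t ≤ ‖Gf z‖ := by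
    intro z hz
    obtain ⟨hz0, hphine, _⟩ := hphiK' z hz
    rw [hGf]
    simp only []
    rw [norm_div, Complex.norm_real, Real.norm_eq_abs,
      abs_of_pos (Real.rpow_pos_of_pos (by norm_num : (0:ℝ) < 12) _)]
    rw [htdef]
    gcongr
    exact hphiM z hz
  -- uniform convergence on K'
  have hFrK' : TendstoUniformlyOn Fr Gf atTop K' := hPratio K' hK'c hK'sub
  -- eventual nonvanishing on K'
  have hNVev : ∀ᶠ n in atTop, ∀ w ∈ K',
      ((P n).map (algebraMap ℝ ℂ)).eval ((((n : ℝ) ^ ((1 : ℝ) / 4) : ℝ) : ℂ) * w) ≠ 0 ∧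
      ((P (n-1)).map (algebraMap ℝ ℂ)).eval ((((n : ℝ) ^ ((1 : ℝ) / 4) : ℝ) : ℂ) * w) ≠ 0 := by
    filter_upwards [Metric.tendstoUniformlyOn_iff.1 hFrK' t ht0] with n hn w hw
    have hne : Fr n w ≠ 0 := by
      intro h0
      have h1 := hn w hw
      rw [h0, dist_zero_right] at h1
      exact absurd (lt_of_le_of_lt (hGlow w hw) h1) (lt_irrefl _)
    rw [hFr] at hne
    simp only [div_ne_zero_iff, mul_ne_zero_iff] at hne
    exact ⟨hne.2, hne.1.2⟩
  -- continuity of Gf on K'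
  have hFrCont : ∀ᶠ n in atTop, ContinuousOn (Fr n) K' := by
    filter_upwards [hNVev] with n hn
    apply ContinuousOn.div
    · exact (continuous_const.mul ((Polynomial.continuous _).comp
        (continuous_const.mul continuous_id))).continuousOn
    · exact ((Polynomial.continuous _).comp (continuous_const.mul continuous_id)).continuousOn
    · intro w hw
      exact (hn w hw).1
  have hGcont : ContinuousOn Gf K' := hFrK'.continuousOn hFrCont.frequently
  have hGuc : UniformContinuousOn Gf K' := hK'c.uniformContinuousOn_of_continuous hGcont
  obtain ⟨MG, hMG⟩ := hK'c.exists_bound_of_continuousOn hGcont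
  have hMG0 : 0 ≤ MG := le_trans (norm_nonneg _) (hMG _ hK'ne.choose_spec)
  -- membership of scaled points
  have hmemgen : ∀ lam : ℕ → ℝ, Tendsto lam atTop (𝓝 1) →
      ∀ᶠ n in atTop, ∀ z ∈ K, ((lam n : ℝ):ℂ) * z ∈ K' := by
    intro lam hlam
    have hev : ∀ᶠ n in atTop, |lam n - 1| ≤ (d/2)/R := by
      have h := hlam.eventually (Metric.ball_mem_nhds (1:ℝ) (by positivity : (0:ℝ) < (d/2)/R))
      filter_upwards [h] with n hn
      have h2 : |lam n - 1| < (d/2)/R := by simpa [Real.dist_eq] using hn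
      linarith
    filter_upwards [hev] with n hn z hz
    apply Metric.mem_cthickening_of_dist_le (((lam n : ℝ):ℂ) * z) z (d/2) K hz
    rw [dist_eq_norm]
    have h7 : ((lam n : ℝ):ℂ) * z - z = ((lam n - 1 : ℝ):ℂ) * z := by push_cast; ring
    rw [h7, norm_mul, Complex.norm_real, Real.norm_eq_abs]
    calc |lam n - 1| * ‖z‖ ≤ ((d/2)/R) * R :=
          mul_le_mul hn (hRbK z hz) (norm_nonneg _) (by positivity)
    _ = d/2 := by field_simp
  -- the three shifted families
  set T1f : ℕ → ℂ → ℂ := fun n z => ((SFR.sR n / SFR.sR (n+1) : ℝ):ℂ) *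
      Fr (n+1) (((SFR.sR n / SFR.sR (n+1) : ℝ):ℂ) * z) with hT1f
  set T2f : ℕ → ℂ → ℂ := fun n z => ((SFR.sR n / SFR.sR (n+2) : ℝ):ℂ) *
      Fr (n+2) (((SFR.sR n / SFR.sR (n+2) : ℝ):ℂ) * z) with hT2f
  set T3f : ℕ → ℂ → ℂ := fun n z => ((SFR.sR n / SFR.sR (n-1) : ℝ):ℂ) *
      Fr (n-1) (((SFR.sR n / SFR.sR (n-1) : ℝ):ℂ) * z) with hT3f
  have hT1 : TendstoUniformlyOn T1f Gf atTop K :=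
    SFR.tuo_shift hR1 hRbK hFrK' hGuc hMG (SFR.lam_add 1) (tendsto_add_atTop_nat 1)
      (hmemgen _ (SFR.lam_add 1)) hKK'
  have hT2 : TendstoUniformlyOn T2f Gf atTop K :=
    SFR.tuo_shift hR1 hRbK hFrK' hGuc hMG (SFR.lam_add 2) (tendsto_add_atTop_nat 2)
      (hmemgen _ (SFR.lam_add 2)) hKK'
  have hT3 : TendstoUniformlyOn T3f Gf atTop K :=
    SFR.tuo_shift hR1 hRbK hFrK' hGuc hMG SFR.lam_sub1 (tendsto_sub_atTop_nat 1)
      (hmemgen _ SFR.lam_sub1) hKK'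
  have hT0 : TendstoUniformlyOn Fr Gf atTop K := hFrK'.mono hKK'
  -- bounds on K
  have hMG' : ∀ z ∈ K, ‖Gf z‖ ≤ MG := fun z hz => hMG z (hKK' hz)
  have hGlowK : ∀ z ∈ K, t ≤ ‖Gf z‖ := fun z hz => hGlow z (hKK' hz)
  have hGGlow : ∀ z ∈ K, t*t ≤ ‖Gf z * Gf z‖ := by
    intro z hz
    rw [norm_mul]
    exact mul_le_mul (hGlowK z hz) (hGlowK z hz) ht0.le (norm_nonneg _)
  have hGGup : ∀ z ∈ K, ‖Gf z * Gf z‖ ≤ MG*MG := by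
    intro z hz
    rw [norm_mul]
    exact mul_le_mul (hMG' z hz) (hMG' z hz) (norm_nonneg _) hMG0
  -- assemble convergence of the denominator family
  set Dsum : ℕ → ℂ → ℂ := fun n z => (T1f n z * T2f n z)⁻¹ + ((sig n / Real.sqrt n : ℝ):ℂ)
      + ((del n / (n:ℝ) : ℝ):ℂ) * (T3f n z * Fr n z) with hDsum
  set Lsum : ℂ → ℂ := fun z => (Gf z * Gf z)⁻¹ + ((1 / Real.sqrt 3 : ℝ):ℂ)
      + ((1 / 12 : ℝ):ℂ) * (Gf z * Gf z) with hLsum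
  have hD : TendstoUniformlyOn Dsum Lsum atTop K := by
    have hProd12 := SFR.tuo_mul hMG' hMG' hT1 hT2
    have hA := SFR.tuo_inv (by positivity : (0:ℝ) < t*t) hGGlow hProd12
    have hsigC : Tendsto (fun n => ((sig n / Real.sqrt n : ℝ):ℂ)) atTop
        (𝓝 ((1 / Real.sqrt 3 : ℝ):ℂ)) := (Complex.continuous_ofReal.tendsto _).comp hsig
    have hdelC : Tendsto (fun n => ((del n / (n:ℝ) : ℝ):ℂ)) atTop
        (𝓝 ((1 / 12 : ℝ):ℂ)) := (Complex.continuous_ofReal.tendsto _).comp hdel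
    have hB := SFR.tuo_const hsigC K
    have hCc := SFR.tuo_const hdelC K
    have hProd30 := SFR.tuo_mul hMG' hMG' hT3 hT0
    have hconstup : ∀ z ∈ K, ‖((1/12:ℝ):ℂ)‖ ≤ 1 := by
      intro z hz
      rw [Complex.norm_real, Real.norm_eq_abs, abs_of_pos (by norm_num : (0:ℝ) < 1/12)]
      norm_num
    have hC := SFR.tuo_mul hconstup hGGup hCc hProd30
    exact (hA.add hB).add hC
  -- identify the limit of the denominator family with z^2
  have hc2 : ((((3/4:ℝ) ^ ((1:ℝ)/4) : ℝ):ℂ)) ^ 2 = (Real.sqrt 3 : ℂ) / 2 := by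
    rw [← Complex.ofReal_pow, SFR.c_sq]; push_cast; ring
  have h12 : ((((12:ℝ) ^ ((1:ℝ)/4) : ℝ):ℂ)) ^ 2 = 2 * (Real.sqrt 3 : ℂ) := by
    rw [← Complex.ofReal_pow, SFR.s12_sq]; push_cast; ring
  have hLeq : Set.EqOn Lsum (fun z => z^2) K := by
    intro z hz
    obtain ⟨hz0, hphine, hid⟩ := hphiK' z (hKK' hz)
    have h5 := SFR.Lexpr_eq hz0 hphine hid hc2 h12
    rw [hLsum, hGf]
    exact h5
  have hDz2 := hD.congr_right hLeq
  -- invert and multiply by z^2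
  have hz2low : ∀ z ∈ K, (d/2)*(d/2) ≤ ‖z^2‖ := by
    intro z hz
    rw [norm_pow, sq]
    have h5 := hlow z (hKK' hz)
    exact mul_le_mul h5 h5 (by positivity) (norm_nonneg _)
  have hInv := SFR.tuo_inv (by positivity : (0:ℝ) < (d/2)*(d/2)) hz2low hDz2
  have hfix := SFR.tuo_fixed (fun z => z^2) K
  have hz2up : ∀ z ∈ K, ‖z^2‖ ≤ R*R := by
    intro z hz
    rw [norm_pow, sq]
    exact mul_le_mul (hRbK z hz) (hRbK z hz) (norm_nonneg _) hR1.le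
  have hz2invup : ∀ z ∈ K, ‖((fun (z:ℂ) => z^2) z)⁻¹‖ ≤ ((d/2)*(d/2))⁻¹ := by
    intro z hz
    rw [norm_inv]
    exact inv_anti₀ (by positivity) (hz2low z hz)
  have hMain := SFR.tuo_mul hz2up hz2invup hfix hInv
  -- identify the limit function with the target
  have hfinal_fun : Set.EqOn (fun z : ℂ => (fun (z:ℂ) => z^2) z * ((fun (z:ℂ) => z^2) z)⁻¹)
      (fun z => (2 * Real.sqrt 3 : ℝ) *
        ((z * phi ((((3 / 4 : ℝ) ^ ((1 : ℝ) / 4) : ℝ) : ℂ) * z)) /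
          (1 + phi ((((3 / 4 : ℝ) ^ ((1 : ℝ) / 4) : ℝ) : ℂ) * z) ^ 2)) ^ 2) K := by
    intro z hz
    obtain ⟨hz0, hphine, hid⟩ := hphiK' z (hKK' hz)
    have hccne : ((((3/4:ℝ) ^ ((1:ℝ)/4) : ℝ):ℂ)) ≠ 0 := by exact_mod_cast SFR.c_pos.ne'
    have h1 := SFR.target_one hz0 hphine hccne hid hc2
    show z^2 * (z^2)⁻¹ = _
    rw [mul_inv_cancel₀ (pow_ne_zero 2 hz0)]
    exact h1.symm
  -- eventual equality of the ratio with z^2 * Dsum⁻¹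
  obtain ⟨N₁, hN₁⟩ := eventually_atTop.1 hNVev
  obtain ⟨N₂, hN₂⟩ := eventually_atTop.1 (hmemgen _ (SFR.lam_add 1))
  have hEqOn : ∀ᶠ n in atTop, Set.EqOn
      (fun z => z^2 * (Dsum n z)⁻¹)
      (fun z =>
          ((P n).map (algebraMap ℝ ℂ)).eval ((((n : ℝ) ^ ((1 : ℝ) / 4) : ℝ) : ℂ) * z) /
            ((Q n).map (algebraMap ℝ ℂ)).eval ((((n : ℝ) ^ ((1 : ℝ) / 4) : ℝ) : ℂ) * z)) K := by
    rw [eventually_atTop]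
    refine ⟨N₁ + N₂ + 2, fun n hn => ?_⟩
    have hn2 : 2 ≤ n := by omega
    have hn1 : 1 ≤ n := by omega
    intro z hz
    obtain ⟨hz0, -, -⟩ := hphiK' z (hKK' hz)
    have hm1 : ((SFR.sR n / SFR.sR (n+1) : ℝ):ℂ) * z ∈ K' := hN₂ n (by omega) z hz
    have hNV1 := hN₁ (n+1) (by omega) _ hm1
    have hNV0 := hN₁ n (by omega) z (hKK' hz)
    simp only [SFR.sR_def, Nat.add_sub_cancel] at hNV1 hNV0
    rw [SFR.arg_cancel (by omega : 1 ≤ n+1) n z] at hNV1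
    have hA1ne := hNV1.1
    have hA0ne := hNV0.1
    have hB1ne := hNV0.2
    -- cast facts
    have hrn : ((SFR.sR n:ℝ):ℂ)^2 = ((Real.sqrt n:ℝ):ℂ) := by
      rw [← Complex.ofReal_pow, SFR.sR_sq]
    have hsqrtpos : (0:ℝ) < Real.sqrt n := Real.sqrt_pos.2 (by exact_mod_cast hn1)
    have hrnne : ((Real.sqrt n:ℝ):ℂ) ≠ 0 := by exact_mod_cast hsqrtpos.ne'
    have hnnC : ((Real.sqrt n:ℝ):ℂ) * ((Real.sqrt n:ℝ):ℂ) = ((n:ℕ):ℂ) := by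
      rw [← Complex.ofReal_mul, Real.mul_self_sqrt (Nat.cast_nonneg n)]
      push_cast
      ring
    have hnnne : ((n:ℕ):ℂ) ≠ 0 := by
      have : n ≠ 0 := by omega
      exact_mod_cast this
    -- connection identity evaluated at w
    have hEid : ((((SFR.sR n:ℝ):ℂ))*z)^2
          * ((Q n).map (algebraMap ℝ ℂ)).eval (((SFR.sR n:ℝ):ℂ)*z)
        = ((P (n+2)).map (algebraMap ℝ ℂ)).eval (((SFR.sR n:ℝ):ℂ)*z)
          + ((sig n : ℝ):ℂ) * ((P n).map (algebraMap ℝ ℂ)).eval (((SFR.sR n:ℝ):ℂ)*z)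
          + ((del n : ℝ):ℂ) * ((P (n-2)).map (algebraMap ℝ ℂ)).eval (((SFR.sR n:ℝ):ℂ)*z) := by
      have h6 := congrArg (fun p : Polynomial ℝ =>
        (p.map (algebraMap ℝ ℂ)).eval (((SFR.sR n:ℝ):ℂ)*z)) (hconn n hn2)
      simpa [Polynomial.map_mul, Polynomial.map_add, Polynomial.map_pow, Polynomial.map_X,
        Polynomial.map_C, Polynomial.eval_mul, Polynomial.eval_add, Polynomial.eval_pow,
        Polynomial.eval_X, Polynomial.eval_C, Complex.coe_algebraMap] using h6
    -- values of the component families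
    have hT1v : T1f n z = ((SFR.sR n:ℝ):ℂ)
        * ((P n).map (algebraMap ℝ ℂ)).eval (((SFR.sR n:ℝ):ℂ)*z)
        / ((P (n+1)).map (algebraMap ℝ ℂ)).eval (((SFR.sR n:ℝ):ℂ)*z) := by
      rw [hT1f, hFr]
      simp only [SFR.sR_def, Nat.add_sub_cancel]
      rw [SFR.arg_cancel (by omega : 1 ≤ n+1) n z, SFR.pref (by omega : 1 ≤ n+1)]
    have hT2v : T2f n z = ((SFR.sR n:ℝ):ℂ)
        * ((P (n+1)).map (algebraMap ℝ ℂ)).eval (((SFR.sR n:ℝ):ℂ)*z)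
        / ((P (n+2)).map (algebraMap ℝ ℂ)).eval (((SFR.sR n:ℝ):ℂ)*z) := by
      rw [hT2f, hFr]
      simp only [SFR.sR_def, Nat.add_sub_cancel]
      rw [SFR.arg_cancel (by omega : 1 ≤ n+2) n z, SFR.pref (by omega : 1 ≤ n+2)]
      have h21 : n + 2 - 1 = n + 1 := by omega
      rw [h21]
    have hT3v : T3f n z = ((SFR.sR n:ℝ):ℂ)
        * ((P (n-2)).map (algebraMap ℝ ℂ)).eval (((SFR.sR n:ℝ):ℂ)*z)
        / ((P (n-1)).map (algebraMap ℝ ℂ)).eval (((SFR.sR n:ℝ):ℂ)*z) := by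
      rw [hT3f, hFr]
      simp only [SFR.sR_def]
      rw [SFR.arg_cancel (by omega : 1 ≤ n-1) n z, SFR.pref (by omega : 1 ≤ n-1)]
      have h27 : n - 1 - 1 = n - 2 := by omega
      rw [h27]
    have hT0v : Fr n z = ((SFR.sR n:ℝ):ℂ)
        * ((P (n-1)).map (algebraMap ℝ ℂ)).eval (((SFR.sR n:ℝ):ℂ)*z)
        / ((P n).map (algebraMap ℝ ℂ)).eval (((SFR.sR n:ℝ):ℂ)*z) := by
      rw [hFr]
      simp only [SFR.sR_def]
    have hsgv : ((sig n / Real.sqrt n : ℝ):ℂ) = ((sig n:ℝ):ℂ)/((Real.sqrt n:ℝ):ℂ) := by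
      push_cast; ring
    have hdlv : ((del n / (n:ℝ) : ℝ):ℂ) = ((del n:ℝ):ℂ)/((n:ℕ):ℂ) := by
      push_cast; ring
    show z^2 * (Dsum n z)⁻¹ = _
    rw [hDsum]
    simp only [SFR.sR_def]
    rw [hT1v, hT2v, hT3v, hT0v, hsgv, hdlv]
    exact SFR.Dsum_eq hz0 hA1ne hA0ne hB1ne hrn hnnC hrnne hnnne hEid
  exact (hMain.congr hEqOn).congr_right hfinal_fun
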